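/- arXiv:2308.07696 — 2 statements merged into one kernel-verified Lean document; each statement's English description precedes it below -/
import Mathlib

section
/- Let c = c^cr = 1/(4 log 2). There exist a constant C₀ > 0 and N₀ such that for every integer N ≥ N₀ and every vertex v ∈ V_N, |Σ_{u ∈ V_N} p(v,u) − (1 − 2c/N)| ≤ C₀/N². (In particular, in the critical case the expected degree of any vertex equals 1 − 2c/N + O(1/N²).) -/
open scoped BigOperators

/-- Vertices of the discrete 2-dimensional torus. -/
abbrev Vtx (N : ℕ) : Type := ZMod N × ZMod N

/-- `ρ_N(i)`: for a residue represented in `{0,…,N−1}`, `ρ_N(i) = i` if `i ≤ N/2`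
and `ρ_N(i) = N − i` otherwise. -/
def rhoN (N : ℕ) (i : ZMod N) : ℕ :=
  if 2 * i.val ≤ N then i.val else N - i.val

/-- Torus distance `ρ(u,v) = ρ_N(u₁ − v₁) + ρ_N(u₂ − v₂)`. -/
def torusDist (N : ℕ) (u v : Vtx N) : ℕ :=
  rhoN N (u.1 - v.1) + rhoN N (u.2 - v.2)

/-- Connection probability `p(u,v) = min(c/(N·ρ(u,v)), 1)` for `u ≠ v`, `p(u,u) = 0`. -/
noncomputable def edgeProb (N : ℕ) (c : ℝ) (u v : Vtx N) : ℝ :=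
  if u = v then 0 else min (c / ((N : ℝ) * (torusDist N u v : ℝ))) 1

/-- The critical value `c^cr = 1/(4 log 2)`. -/
noncomputable def ccr : ℝ := 1 / (4 * Real.log 2)

open Finset

/-! ### Auxiliary harmonic-number machinery -/

noncomputable def Hh (n : ℕ) : ℝ := ∑ i ∈ Finset.range n, (1:ℝ)/(i+1)

lemma Hh_succ (n : ℕ) : Hh (n+1) = Hh n + 1/((n:ℝ)+1) := by
  simp [Hh, Finset.sum_range_succ]

lemma sum_Hh (n : ℕ) : ∑ a ∈ range n, Hh (a+1) = ((n:ℝ)+1) * Hh n - n := by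
  induction n with
  | zero => simp [Hh]
  | succ n ih =>
    rw [Finset.sum_range_succ, ih, Hh_succ]
    have h : ((n:ℝ)+1) ≠ 0 := by positivity
    push_cast
    field_simp
    ring

lemma Hh_add (m q : ℕ) : Hh (m+q) = Hh m + ∑ b ∈ range q, (1:ℝ)/(m+b+1) := by
  induction q with
  | zero => simp
  | succ q ih =>
    rw [← add_assoc]
    rw [show Hh (m+q+1) = Hh (m+q) + 1/((m:ℝ)+(q:ℝ)+1) by
      simp [Hh, Finset.sum_range_succ]]
    rw [ih, Finset.sum_range_succ]
    push_cast; ring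

lemma Dsum (P Q : ℕ) :
    ∑ a ∈ range P, ∑ b ∈ range Q, (1:ℝ)/((a:ℝ)+1+((b:ℝ)+1)) =
      ((P:ℝ)+(Q:ℝ)+1) * Hh (P+Q) - ((P:ℝ)+1) * Hh P - ((Q:ℝ)+1) * Hh Q := by
  have inner : ∀ a : ℕ, ∑ b ∈ range Q, (1:ℝ)/((a:ℝ)+1+((b:ℝ)+1)) = Hh (a+1+Q) - Hh (a+1) := by
    intro a
    rw [Hh_add (a+1) Q]
    have : ∀ b : ℕ, (1:ℝ)/((a:ℝ)+1+((b:ℝ)+1)) = 1/(((a+1:ℕ):ℝ)+(b:ℝ)+1) := by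
      intro b; push_cast; ring_nf
    simp only [this]
    ring
  simp only [inner]
  rw [Finset.sum_sub_distrib]
  have shift : ∑ a ∈ range P, Hh (a+1+Q) = ∑ a ∈ range (Q+P), Hh (a+1) - ∑ a ∈ range Q, Hh (a+1) := by
    rw [Finset.sum_range_add (fun a => Hh (a+1)) Q P]
    have : ∀ a : ℕ, Hh (Q + a + 1) = Hh (a + 1 + Q) := by intro a; congr 1; omega
    simp only [this]
    ring
  rw [shift, sum_Hh, sum_Hh, sum_Hh]
  have : Q + P = P + Q := by omega
  rw [this]
  push_cast
  ring

/-! ### The key asymptotic estimate for harmonic numbers -/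

lemma term_bound (m : ℝ) (hm : 1 ≤ m) :
    |1/(m+1) - (Real.log (m+1) - Real.log m) + ((1/2)/m - (1/2)/(m+1))| ≤ 2/m^3 := by
  have hm0 : (0:ℝ) < m := by linarith
  have hm1 : (0:ℝ) < m + 1 := by linarith
  set x : ℝ := 1/(m+1) with hx
  have hx0 : 0 < x := by positivity
  have hxlt : x ≤ 1/2 := by
    rw [hx, div_le_div_iff₀ hm1 two_pos]; linarith
  have habs : |x| < 1 := by rw [abs_of_pos hx0]; linarith
  have h1x : 1 - x = m / (m+1) := by rw [hx]; field_simp; ring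
  have hlog : Real.log (1 - x) = Real.log m - Real.log (m+1) := by
    rw [h1x, Real.log_div (ne_of_gt hm0) (ne_of_gt hm1)]
  have key := Real.abs_log_sub_add_sum_range_le habs 2
  rw [hlog] at key
  have hsum : (∑ i ∈ range 2, x ^ (i+1)/((i:ℝ)+1)) = x + x^2/2 := by
    rw [Finset.sum_range_succ, Finset.sum_range_one]
    norm_num
  rw [hsum, abs_of_pos hx0] at key
  have hxval : x^3/(1-x) = 1/(m*(m+1)^2) := by
    rw [h1x, hx]; field_simp
  rw [hxval] at key
  have hB : (1/2)/m - (1/2)/(m+1) - x^2/2 = 1/(2*m*(m+1)^2) := by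
    rw [hx]; field_simp; ring
  have tri : |1/(m+1) - (Real.log (m+1) - Real.log m) + ((1/2)/m - (1/2)/(m+1))| ≤
      |x + x^2/2 + (Real.log m - Real.log (m+1))| + |(1/2)/m - (1/2)/(m+1) - x^2/2| := by
    have : 1/(m+1) - (Real.log (m+1) - Real.log m) + ((1/2)/m - (1/2)/(m+1)) =
        (x + x^2/2 + (Real.log m - Real.log (m+1))) + ((1/2)/m - (1/2)/(m+1) - x^2/2) := by
      rw [hx]; ring
    rw [this]; exact abs_add_le _ _
  have hBpos : (0:ℝ) < 1/(2*m*(m+1)^2) := by positivity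
  rw [hB] at tri
  rw [abs_of_pos hBpos] at tri
  have e1 : 1/(m*(m+1)^2) ≤ 1/m^3 := by
    apply one_div_le_one_div_of_le (by positivity)
    nlinarith
  have e2 : 1/(2*m*(m+1)^2) ≤ 1/m^3 := by
    apply one_div_le_one_div_of_le (by positivity)
    nlinarith
  have e3 : 2/m^3 = 1/m^3 + 1/m^3 := by ring
  linarith [key, tri]

lemma Hh_diff (M : ℕ) (hM : 1 ≤ M) :
    |Hh (2*M) - Hh M - Real.log 2 + 1/(4*(M:ℝ))| ≤ 2/(M:ℝ)^2 := by
  have hM0 : (0:ℝ) < M := by exact_mod_cast hM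
  have hHd : Hh (2*M) - Hh M = ∑ b ∈ range M, (1:ℝ)/((M:ℝ)+(b:ℝ)+1) := by
    rw [two_mul, Hh_add]; ring
  have hlog : Real.log 2 = ∑ b ∈ range M, (Real.log ((M:ℝ)+(b:ℝ)+1) - Real.log ((M:ℝ)+(b:ℝ))) := by
    have := Finset.sum_range_sub (fun a : ℕ => Real.log ((M:ℝ)+(a:ℝ))) M
    have e : ∀ b : ℕ, Real.log ((M:ℝ)+((b:ℕ)+1:ℕ)) = Real.log ((M:ℝ)+(b:ℝ)+1) := by
      intro b; push_cast; ring_nf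
    rw [show (∑ b ∈ range M, (Real.log ((M:ℝ)+(b:ℝ)+1) - Real.log ((M:ℝ)+(b:ℝ)))) =
        (∑ i ∈ range M, ((fun a : ℕ => Real.log ((M:ℝ)+(a:ℝ))) (i+1) - (fun a : ℕ => Real.log ((M:ℝ)+(a:ℝ))) i)) by
      apply Finset.sum_congr rfl; intro b _; simp only; rw [e b]]
    rw [this]
    simp only [Nat.cast_zero, add_zero]
    rw [show (M:ℝ)+(M:ℝ) = 2*(M:ℝ) by ring, Real.log_mul two_ne_zero (ne_of_gt hM0)]
    ring
  have hquarter : 1/(4*(M:ℝ)) = ∑ b ∈ range M, ((1/2)/((M:ℝ)+(b:ℝ)) - (1/2)/((M:ℝ)+(b:ℝ)+1)) := by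
    have := Finset.sum_range_sub' (fun a : ℕ => (1/2)/((M:ℝ)+(a:ℝ))) M
    rw [show (∑ b ∈ range M, ((1/2)/((M:ℝ)+(b:ℝ)) - (1/2)/((M:ℝ)+(b:ℝ)+1))) =
        (∑ i ∈ range M, ((fun a : ℕ => (1/2)/((M:ℝ)+(a:ℝ))) i - (fun a : ℕ => (1/2)/((M:ℝ)+(a:ℝ))) (i+1))) by
      apply Finset.sum_congr rfl; intro b _; simp only; push_cast; ring_nf]
    rw [this]
    simp only [Nat.cast_zero, add_zero]
    field_simp
    ring
  rw [hHd, hlog, hquarter, ← Finset.sum_sub_distrib, ← Finset.sum_add_distrib]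
  calc |∑ b ∈ range M, ((1:ℝ)/((M:ℝ)+(b:ℝ)+1) - (Real.log ((M:ℝ)+(b:ℝ)+1) - Real.log ((M:ℝ)+(b:ℝ)))
          + ((1/2)/((M:ℝ)+(b:ℝ)) - (1/2)/((M:ℝ)+(b:ℝ)+1)))|
      ≤ ∑ b ∈ range M, |(1:ℝ)/((M:ℝ)+(b:ℝ)+1) - (Real.log ((M:ℝ)+(b:ℝ)+1) - Real.log ((M:ℝ)+(b:ℝ)))
          + ((1/2)/((M:ℝ)+(b:ℝ)) - (1/2)/((M:ℝ)+(b:ℝ)+1))| := Finset.abs_sum_le_sum_abs _ _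
    _ ≤ ∑ _b ∈ range M, 2/(M:ℝ)^3 := by
        apply Finset.sum_le_sum
        intro b _
        have hM1 : (1:ℝ) ≤ (M:ℝ) := by exact_mod_cast hM
        have hb0 : (0:ℝ) ≤ (b:ℝ) := Nat.cast_nonneg b
        have hb : (1:ℝ) ≤ (M:ℝ)+(b:ℝ) := by linarith
        refine le_trans (term_bound ((M:ℝ)+(b:ℝ)) hb) ?_
        have h3 : (M:ℝ)^3 ≤ ((M:ℝ)+(b:ℝ))^3 := pow_le_pow_left₀ hM0.le (by linarith) 3
        exact div_le_div_of_nonneg_left (by norm_num) (by positivity) h3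
    _ = 2/(M:ℝ)^2 := by
        rw [Finset.sum_const, Finset.card_range, nsmul_eq_mul]
        field_simp

/-! ### Reduction of torus sums to harmonic sums -/

noncomputable def gfun (k : ℕ) : ℝ := if k = 0 then 0 else 1/(k:ℝ)

lemma gfun_succ (k : ℕ) : gfun (k+1) = 1/((k:ℝ)+1) := by
  simp [gfun]

lemma zmod_sum (N : ℕ) [NeZero N] (G : ℕ → ℝ) :
    ∑ x : ZMod N, G (rhoN N x) =
      G 0 + (∑ a ∈ range (N/2), G (a+1)) + ∑ a ∈ range (N-1-N/2), G (a+1) := by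
  have hN : 0 < N := Nat.pos_of_ne_zero (NeZero.ne N)
  have step1 : ∑ x : ZMod N, G (rhoN N x)
      = ∑ j ∈ range N, G (if 2*j ≤ N then j else N - j) := by
    apply Finset.sum_nbij' (i := fun x : ZMod N => x.val) (j := fun n : ℕ => (n : ZMod N))
    · intro x _; exact Finset.mem_range.mpr (ZMod.val_lt x)
    · intro j _; exact Finset.mem_univ _
    · intro x _; exact ZMod.natCast_rightInverse x
    · intro j hj; exact ZMod.val_cast_of_lt (Finset.mem_range.mp hj)
    · intro x _; rfl
  rw [step1]
  set M := N/2 with hM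
  set K := N-1-N/2 with hK
  have hNs : N = (M+1) + K := by omega
  rw [show range N = range ((M+1)+K) by rw [← hNs]]
  rw [Finset.sum_range_add]
  congr 1
  · have h2 : ∀ j ∈ range (M+1), G (if 2*j ≤ N then j else N - j) = G j := by
      intro j hj
      have : 2*j ≤ N := by
        have := Finset.mem_range.mp hj; omega
      rw [if_pos this]
    rw [Finset.sum_congr rfl h2, Finset.sum_range_succ']
    ring
  · have h3 : ∀ a ∈ range K, G (if 2*(M+1+a) ≤ N then (M+1+a) else N - (M+1+a)) = G (K - a) := by
      intro a ha
      have haK := Finset.mem_range.mp ha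
      have hn : ¬ (2*(M+1+a) ≤ N) := by omega
      rw [if_neg hn]
      congr 1
      omega
    rw [Finset.sum_congr rfl h3]
    have h4 : ∀ a ∈ range K, G (K - a) = (fun j => G (j+1)) (K - 1 - a) := by
      intro a ha
      have := Finset.mem_range.mp ha
      simp only
      congr 1
      omega
    rw [Finset.sum_congr rfl h4, Finset.sum_range_reflect (fun j => G (j+1)) K]

noncomputable def Dv (P Q : ℕ) : ℝ := ∑ a ∈ range P, ∑ b ∈ range Q, gfun ((a+1)+(b+1))

lemma gfun_sum_range (P : ℕ) : ∑ b ∈ range P, gfun (b+1) = Hh P := by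
  unfold Hh
  apply Finset.sum_congr rfl
  intro b _
  rw [gfun_succ]

lemma Dv_eq (P Q : ℕ) : Dv P Q =
    ((P:ℝ)+(Q:ℝ)+1) * Hh (P+Q) - ((P:ℝ)+1) * Hh P - ((Q:ℝ)+1) * Hh Q := by
  rw [← Dsum]
  unfold Dv
  apply Finset.sum_congr rfl
  intro a _
  apply Finset.sum_congr rfl
  intro b _
  have : (a+1)+(b+1) ≠ 0 := by omega
  simp only [gfun, this, if_false]
  push_cast
  ring_nf

lemma Ssum (N : ℕ) [NeZero N] :
    ∑ w : Vtx N, gfun (rhoN N w.1 + rhoN N w.2) =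
      2 * Hh (N/2) + 2 * Hh (N-1-N/2)
      + ((Dv (N/2) (N/2) + Dv (N/2) (N-1-N/2)) + (Dv (N-1-N/2) (N/2) + Dv (N-1-N/2) (N-1-N/2))) := by
  set M := N/2 with hM
  set K := N-1-N/2 with hK
  rw [Fintype.sum_prod_type]
  have inner : ∀ x : ZMod N, ∑ y : ZMod N, gfun (rhoN N x + rhoN N y) =
      (fun a => gfun a + (∑ b ∈ range M, gfun (a + (b+1))) + ∑ b ∈ range K, gfun (a + (b+1))) (rhoN N x) := by
    intro x
    have h := zmod_sum N (fun b => gfun (rhoN N x + b))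
    simpa only [add_zero] using h
  rw [Finset.sum_congr rfl (fun x _ => inner x)]
  rw [zmod_sum N (fun a => gfun a + (∑ b ∈ range M, gfun (a + (b+1))) + ∑ b ∈ range K, gfun (a + (b+1)))]
  have g0 : gfun 0 = 0 := by simp [gfun]
  simp only [Nat.zero_add, Finset.sum_add_distrib, gfun_sum_range, Dv, g0]
  ring

lemma S_odd (m : ℕ) [NeZero (2*m+1)] :
    ∑ w : Vtx (2*m+1), gfun (rhoN (2*m+1) w.1 + rhoN (2*m+1) w.2) =
      4*(((2*m+1:ℕ)):ℝ)*(Hh (2*m) - Hh m) := by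
  rw [Ssum]
  rw [show (2*m+1)/2 = m by omega, show 2*m+1-1-m = m by omega]
  rw [Dv_eq]
  rw [show m+m = 2*m by ring]
  push_cast
  ring

lemma S_even (m : ℕ) [NeZero (2*m+2)] :
    ∑ w : Vtx (2*m+2), gfun (rhoN (2*m+2) w.1 + rhoN (2*m+2) w.2) =
      4*(((2*m+2:ℕ)):ℝ)*(Hh (2*(m+1)) - Hh (m+1)) - 3/(((2*m+2:ℕ)):ℝ) := by
  rw [Ssum]
  rw [show (2*m+2)/2 = m+1 by omega, show 2*m+2-1-(m+1) = m by omega]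
  rw [Dv_eq, Dv_eq, Dv_eq, Dv_eq]
  rw [show (m+1)+(m+1) = 2*m+2 by ring, show (m+1)+m = 2*m+1 by ring,
      show m+(m+1) = 2*m+1 by ring, show m+m = 2*m by ring]
  rw [show (2*m+2) = (2*m+1)+1 from rfl, Hh_succ (2*m+1), Hh_succ (2*m), Hh_succ m]
  rw [show 2*(m+1) = 2*m+1+1 by ring]
  rw [Hh_succ (2*m+1), Hh_succ (2*m)]
  have h1 : ((m:ℝ)+1) ≠ 0 := by positivity
  have h2 : (2*(m:ℝ)+1) ≠ 0 := by positivity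
  have h3 : (2*(m:ℝ)+1+1) ≠ 0 := by positivity
  push_cast
  field_simp
  ring

lemma rho_pos (N : ℕ) [NeZero N] (x : ZMod N) (hx : x ≠ 0) : 1 ≤ rhoN N x := by
  have hv : x.val ≠ 0 := fun h => hx ((ZMod.val_eq_zero x).mp h)
  have hlt : x.val < N := ZMod.val_lt x
  unfold rhoN
  split <;> omega

lemma S_bound (N : ℕ) [NeZero N] (hN : 4 ≤ N) :
    |(∑ w : Vtx N, gfun (rhoN N w.1 + rhoN N w.2)) - (4*(N:ℝ)*Real.log 2 - 2)| ≤ 100/(N:ℝ) := by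
  rcases Nat.even_or_odd N with he | ho
  · -- even : N = 2*m+2
    obtain ⟨k, hk⟩ := he
    obtain ⟨m, hm⟩ : ∃ m, N = 2*m+2 := ⟨k-1, by omega⟩
    have hm1 : 1 ≤ m := by omega
    subst hm
    rw [S_even m]
    have hE := Hh_diff (m+1) (by omega)
    push_cast at hE ⊢
    have hMr : (2:ℝ) ≤ (m:ℝ)+1 := by
      have : (1:ℝ) ≤ (m:ℝ) := by exact_mod_cast hm1
      linarith
    have hMr0 : (0:ℝ) < (m:ℝ)+1 := by linarith
    set E : ℝ := Hh (2*(m+1)) - Hh (m+1) - Real.log 2 + 1/(4*((m:ℝ)+1)) with hEdef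
    have heq : 4*(2*(m:ℝ)+2)*(Hh (2*(m+1)) - Hh (m+1)) - 3/(2*(m:ℝ)+2)
        - (4*(2*(m:ℝ)+2)*Real.log 2 - 2) = (8*((m:ℝ)+1))*E - 3/(2*(m:ℝ)+2) := by
      rw [hEdef]
      field_simp
      ring
    rw [heq]
    have tri : |(8*((m:ℝ)+1))*E - 3/(2*(m:ℝ)+2)| ≤ (8*((m:ℝ)+1))*|E| + 3/(2*(m:ℝ)+2) := by
      rw [sub_eq_add_neg]
      refine le_trans (abs_add_le _ _) ?_
      rw [abs_neg, abs_mul, abs_of_nonneg (by positivity : (0:ℝ) ≤ 8*((m:ℝ)+1)),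
        abs_of_nonneg (by positivity : (0:ℝ) ≤ 3/(2*(m:ℝ)+2))]
    refine le_trans tri ?_
    have h1 : (8*((m:ℝ)+1))*|E| ≤ (8*((m:ℝ)+1))*(2/((m:ℝ)+1)^2) :=
      mul_le_mul_of_nonneg_left hE (by positivity)
    have h2 : (8*((m:ℝ)+1))*(2/((m:ℝ)+1)^2) + 3/(2*(m:ℝ)+2) ≤ 100/(2*(m:ℝ)+2) := by
      rw [show (8*((m:ℝ)+1))*(2/((m:ℝ)+1)^2) = 32/(2*((m:ℝ)+1)) by field_simp; ring]
      rw [show 2*(m:ℝ)+2 = 2*((m:ℝ)+1) by ring]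
      rw [← add_div, div_le_div_iff₀ (by linarith) (by linarith)]
      nlinarith
    linarith
  · -- odd : N = 2*m+1
    obtain ⟨m, hm⟩ := ho
    have hm1 : 2 ≤ m := by omega
    subst hm
    rw [S_odd m]
    have hE := Hh_diff m (by omega)
    push_cast at hE ⊢
    have hMr : (2:ℝ) ≤ (m:ℝ) := by exact_mod_cast hm1
    have hMr0 : (0:ℝ) < (m:ℝ) := by linarith
    set E : ℝ := Hh (2*m) - Hh m - Real.log 2 + 1/(4*(m:ℝ)) with hEdef
    have heq : 4*(2*(m:ℝ)+1)*(Hh (2*m) - Hh m) - (4*(2*(m:ℝ)+1)*Real.log 2 - 2)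
        = (4*(2*(m:ℝ)+1))*E - 1/(m:ℝ) := by
      rw [hEdef]
      field_simp
      ring
    rw [heq]
    have tri : |(4*(2*(m:ℝ)+1))*E - 1/(m:ℝ)| ≤ (4*(2*(m:ℝ)+1))*|E| + 1/(m:ℝ) := by
      rw [sub_eq_add_neg]
      refine le_trans (abs_add_le _ _) ?_
      rw [abs_neg, abs_mul, abs_of_nonneg (by positivity : (0:ℝ) ≤ 4*(2*(m:ℝ)+1)),
        abs_of_nonneg (by positivity : (0:ℝ) ≤ 1/(m:ℝ))]
    refine le_trans tri ?_
    have h1 : (4*(2*(m:ℝ)+1))*|E| ≤ (4*(2*(m:ℝ)+1))*(2/(m:ℝ)^2) :=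
      mul_le_mul_of_nonneg_left hE (by positivity)
    have h2 : (4*(2*(m:ℝ)+1))*(2/(m:ℝ)^2) + 1/(m:ℝ) ≤ 100/(2*(m:ℝ)+1) := by
      rw [show (4*(2*(m:ℝ)+1))*(2/(m:ℝ)^2) + 1/(m:ℝ) = (17*(m:ℝ)+8)/(m:ℝ)^2 by
        field_simp; ring]
      rw [div_le_div_iff₀ (by positivity) (by linarith)]
      nlinarith
    linarith

/-- For the critical `c = 1/(4 log 2)` there are `C₀ > 0` and `N₀` such that for every
`N ≥ N₀` and every vertex `v`, `|Σ_u p(v,u) − (1 − 2c/N)| ≤ C₀/N²`. -/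
theorem stmt4 :
    ∃ C₀ : ℝ, 0 < C₀ ∧ ∃ N₀ : ℕ, ∀ (N : ℕ) [NeZero N], N₀ ≤ N →
      ∀ v : Vtx N,
        |(∑ u : Vtx N, edgeProb N ccr v u) - (1 - 2 * ccr / (N : ℝ))| ≤
          C₀ / (N : ℝ) ^ 2 := by
  refine ⟨100, by norm_num, 4, ?_⟩
  intro N _ hN v
  have hN0 : (0:ℝ) < N := by
    have : 0 < N := by omega
    exact_mod_cast this
  have hN1 : (1:ℝ) ≤ N := by
    have : 1 ≤ N := by omega
    exact_mod_cast this
  have hlog2 : (0:ℝ) < Real.log 2 := Real.log_pos one_lt_two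
  have hccr_pos : 0 < ccr := by unfold ccr; positivity
  have hccr_le : ccr ≤ 1 := by
    unfold ccr
    rw [div_le_one (by positivity)]
    linarith [Real.log_two_gt_d9]
  have step1 : ∑ u : Vtx N, edgeProb N ccr v u
      = ccr/(N:ℝ) * ∑ w : Vtx N, gfun (rhoN N w.1 + rhoN N w.2) := by
    rw [Finset.mul_sum]
    rw [← Equiv.sum_comp (Equiv.subLeft v) (edgeProb N ccr v)]
    apply Finset.sum_congr rfl
    intro w _
    have happ : (Equiv.subLeft v) w = v - w := rfl
    rw [happ]
    by_cases hw : w = 0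
    · subst hw
      simp [edgeProb, rhoN, gfun]
    · have hne : v ≠ v - w := by
        intro h
        exact hw (sub_eq_self.mp h.symm)
      rw [edgeProb, if_neg hne]
      have hdist : torusDist N v (v - w) = rhoN N w.1 + rhoN N w.2 := by
        simp [torusDist, Prod.fst_sub, Prod.snd_sub, sub_sub_cancel]
      rw [hdist]
      have hrho : 1 ≤ rhoN N w.1 + rhoN N w.2 := by
        rcases (show w.1 ≠ 0 ∨ w.2 ≠ 0 by
          by_contra h
          push_neg at h
          exact hw (Prod.ext h.1 h.2)) with h | h
        · have := rho_pos N w.1 h; omega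
        · have := rho_pos N w.2 h; omega
      set ρ : ℕ := rhoN N w.1 + rhoN N w.2 with hρ
      have hρ1 : (1:ℝ) ≤ (ρ:ℝ) := by exact_mod_cast hrho
      have hρ0 : ρ ≠ 0 := by omega
      have hmin : min (ccr/((N:ℝ)*(ρ:ℝ))) 1 = ccr/((N:ℝ)*(ρ:ℝ)) := by
        apply min_eq_left
        rw [div_le_one (by nlinarith)]
        nlinarith
      rw [hmin]
      rw [show gfun ρ = 1/(ρ:ℝ) by simp [gfun, hρ0]]
      rw [div_mul_div_comm, mul_one]
  rw [step1]
  have hone : ccr * (4*Real.log 2) = 1 := by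
    unfold ccr; field_simp
  have htarget : 1 - 2*ccr/(N:ℝ) = ccr/(N:ℝ) * (4*(N:ℝ)*Real.log 2 - 2) := by
    have h : ccr/(N:ℝ) * (4*(N:ℝ)*Real.log 2 - 2) = ccr*(4*Real.log 2) - 2*ccr/(N:ℝ) := by
      field_simp
    rw [h, hone]
  rw [htarget, ← mul_sub, abs_mul, abs_of_nonneg (by positivity : (0:ℝ) ≤ ccr/(N:ℝ))]
  have hb := S_bound N (by omega)
  calc ccr/(N:ℝ) * |(∑ w : Vtx N, gfun (rhoN N w.1 + rhoN N w.2)) - (4*(N:ℝ)*Real.log 2 - 2)|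
      ≤ ccr/(N:ℝ) * (100/(N:ℝ)) := mul_le_mul_of_nonneg_left hb (by positivity)
    _ ≤ 1/(N:ℝ) * (100/(N:ℝ)) := by gcongr
    _ = 100/(N:ℝ)^2 := by field_simp
end

section
/- Let c = c^cr = 1/(4 log 2). There exists N₀ such that for every integer N ≥ N₀ and all vertices u, v ∈ V_N, the two-step transition probability satisfies P²(u,v) = Σ_{x ∈ V_N} P(u,x)·P(x,v) ≥ (c/2)·(1/N²). -/
open scoped BigOperators

/-- Transition matrix `P(u,v) = p(u,v)/Z_N` for `u ≠ v`, `P(u,u) = 0`, where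
`Z_N = Σ_{w ≠ u} p(u,w)` (this holds automatically since `p(u,u) = 0`). -/
noncomputable def transP (N : ℕ) [NeZero N] (c : ℝ) (u v : Vtx N) : ℝ :=
  edgeProb N c u v / ∑ w : Vtx N, edgeProb N c u w

lemma ccr_pos : 0 < ccr := by
  have h := Real.log_pos (by norm_num : (1:ℝ) < 2)
  unfold ccr; positivity

lemma ccr_le : ccr ≤ 0.38 := by
  have h := Real.log_two_gt_d9
  unfold ccr
  rw [div_le_iff₀ (by nlinarith)]
  nlinarith



section StmtNine
variable (N : ℕ) [NeZero N]
variable (N : ℕ) [NeZero N]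

lemma rhoN_pos {i : ZMod N} (h : i ≠ 0) : 1 ≤ rhoN N i := by
  have hv : i.val < N := ZMod.val_lt i
  have hv0 : i.val ≠ 0 := fun h0 => h ((ZMod.val_eq_zero i).mp h0)
  unfold rhoN; split <;> omega

lemma rhoN_two_mul_le (i : ZMod N) : 2 * rhoN N i ≤ N := by
  have hv : i.val < N := ZMod.val_lt i
  unfold rhoN; split <;> omega

lemma torusDist_le (u v : Vtx N) : torusDist N u v ≤ N := by
  have h1 := rhoN_two_mul_le N (u.1 - v.1)
  have h2 := rhoN_two_mul_le N (u.2 - v.2)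
  unfold torusDist; omega

lemma torusDist_pos {u v : Vtx N} (h : u ≠ v) : 1 ≤ torusDist N u v := by
  have : u.1 - v.1 ≠ 0 ∨ u.2 - v.2 ≠ 0 := by
    by_contra hc
    push_neg at hc
    exact h (Prod.ext (sub_eq_zero.mp hc.1) (sub_eq_zero.mp hc.2))
  unfold torusDist
  rcases this with h'|h'
  · have := rhoN_pos N h'; omega
  · have := rhoN_pos N h'; omega

lemma card_rho_lt (r : ℕ) :
    (Finset.univ.filter fun i : ZMod N => rhoN N i < r).card ≤ 2 * r - 1 := by
  have hN : 1 ≤ N := Nat.one_le_iff_ne_zero.mpr (NeZero.ne N)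
  by_cases hrN : r ≤ N
  · have hmaps : ∀ i ∈ (Finset.univ.filter fun i : ZMod N => rhoN N i < r),
        i.val ∈ Finset.range r ∪ Finset.Ioo (N - r) N := by
      intro i hi
      have hv : i.val < N := ZMod.val_lt i
      rw [Finset.mem_filter] at hi
      have hr' := hi.2
      unfold rhoN at hr'
      rw [Finset.mem_union, Finset.mem_range, Finset.mem_Ioo]
      split at hr' <;> omega
    have hcard := Finset.card_le_card_of_injOn (fun i => i.val) (fun i hi => hmaps i hi)
      (fun a _ b _ hab => ZMod.val_injective N hab)
    have : (Finset.range r ∪ Finset.Ioo (N - r) N).card ≤ 2 * r - 1 := by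
      calc (Finset.range r ∪ Finset.Ioo (N - r) N).card
          ≤ (Finset.range r).card + (Finset.Ioo (N - r) N).card := Finset.card_union_le _ _
        _ ≤ 2 * r - 1 := by rw [Finset.card_range, Nat.card_Ioo]; omega
    omega
  · calc (Finset.univ.filter fun i : ZMod N => rhoN N i < r).card
        ≤ (Finset.univ : Finset (ZMod N)).card := Finset.card_filter_le _ _
      _ = N := by rw [Finset.card_univ, ZMod.card]
      _ ≤ 2 * r - 1 := by omega

lemma card_rho_eq (r : ℕ) (hr : 1 ≤ r) :
    (Finset.univ.filter fun i : ZMod N => rhoN N i = r).card ≤ 2 := by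
  have hmaps : ∀ i ∈ (Finset.univ.filter fun i : ZMod N => rhoN N i = r),
      i.val ∈ ({r, N - r} : Finset ℕ) := by
    intro i hi
    have hv : i.val < N := ZMod.val_lt i
    rw [Finset.mem_filter] at hi
    have hr' := hi.2
    unfold rhoN at hr'
    rw [Finset.mem_insert, Finset.mem_singleton]
    split at hr' <;> omega
  have hcard := Finset.card_le_card_of_injOn (fun i => i.val) (fun i hi => hmaps i hi)
    (fun a _ b _ hab => ZMod.val_injective N hab)
  calc _ ≤ ({r, N - r} : Finset ℕ).card := hcard
    _ ≤ 2 := Finset.card_insert_le _ _ |>.trans (by simp)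


lemma inner_lt (r : ℕ) :
    ∑ i : ZMod N, (if rhoN N i < r then ((r : ℝ))⁻¹ else 0) ≤ 2 := by
  rcases Nat.eq_zero_or_pos r with hr | hr
  · simp [hr]
  · rw [Finset.sum_ite, Finset.sum_const, Finset.sum_const_zero, add_zero, nsmul_eq_mul]
    have hcard : ((Finset.univ.filter fun i : ZMod N => rhoN N i < r).card : ℝ)
        ≤ 2 * r - 1 := by
      have h := card_rho_lt N r
      have : ((2 * r - 1 : ℕ) : ℝ) = 2 * r - 1 := by
        push_cast [Nat.cast_sub (by omega : 1 ≤ 2 * r)]; ring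
      calc _ ≤ ((2 * r - 1 : ℕ) : ℝ) := by exact_mod_cast h
        _ = _ := this
    have hrpos : (0:ℝ) < r := by exact_mod_cast hr
    calc _ ≤ (2 * r - 1) * ((r:ℝ))⁻¹ := by
          apply mul_le_mul_of_nonneg_right hcard (by positivity)
      _ ≤ 2 := by rw [sub_mul, mul_assoc, mul_inv_cancel₀ (ne_of_gt hrpos)]
                  have : (0:ℝ) ≤ ((r:ℝ))⁻¹ := by positivity
                  linarith

lemma inner_eq (r : ℕ) :
    ∑ i : ZMod N, (if rhoN N i = r then (((r + r : ℕ) : ℝ))⁻¹ else 0) ≤ 1 := by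
  rcases Nat.eq_zero_or_pos r with hr | hr
  · simp [hr]
  · rw [Finset.sum_ite, Finset.sum_const, Finset.sum_const_zero, add_zero, nsmul_eq_mul]
    have hcard : ((Finset.univ.filter fun i : ZMod N => rhoN N i = r).card : ℝ) ≤ 2 := by
      exact_mod_cast card_rho_eq N r hr
    have hrpos : (0:ℝ) < r := by exact_mod_cast hr
    have hrr : ((r + r : ℕ) : ℝ) = 2 * r := by push_cast; ring
    calc _ ≤ 2 * (((r + r : ℕ) : ℝ))⁻¹ := by
          apply mul_le_mul_of_nonneg_right hcard (by positivity)
      _ = 2 * (2 * (r:ℝ))⁻¹ := by rw [hrr]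
      _ = ((r:ℝ))⁻¹ := by field_simp
      _ ≤ 1 := by rw [inv_le_one_iff₀]; right; exact_mod_cast hr

-- key pointwise bound
lemma key_pointwise (a b : ℕ) :
    (((a + b : ℕ) : ℝ))⁻¹ ≤ (if b < a then ((a:ℝ))⁻¹ else 0)
      + (if a < b then ((b:ℝ))⁻¹ else 0)
      + (if a = b then (((a + a : ℕ) : ℝ))⁻¹ else 0) := by
  rcases lt_trichotomy a b with h | h | h
  · rw [if_neg (by omega), if_pos h, if_neg (by omega), zero_add, add_zero]
    have hb : (0:ℝ) < (b:ℝ) := by exact_mod_cast (by omega : 0 < b)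
    apply inv_anti₀ hb
    push_cast; linarith
  · subst h
    simp
  · rw [if_pos h, if_neg (by omega), if_neg (by omega), add_zero, add_zero]
    have ha : (0:ℝ) < (a:ℝ) := by exact_mod_cast (by omega : 0 < a)
    apply inv_anti₀ ha
    push_cast; linarith
lemma sum_inv_rho_le (u : Vtx N) :
    ∑ w : Vtx N, ((torusDist N u w : ℕ) : ℝ)⁻¹ ≤ 5 * N := by
  have hcard : (Finset.univ : Finset (ZMod N)).card = N := by
    rw [Finset.card_univ, ZMod.card]
  have htrans : ∑ w : Vtx N, ((torusDist N u w : ℕ) : ℝ)⁻¹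
      = ∑ x : Vtx N, (((rhoN N x.1 + rhoN N x.2 : ℕ) : ℝ))⁻¹ := by
    rw [← Equiv.sum_comp (Equiv.subLeft u)
      (fun x : Vtx N => (((rhoN N x.1 + rhoN N x.2 : ℕ) : ℝ))⁻¹)]
    apply Finset.sum_congr rfl
    intro w _
    simp [torusDist, Equiv.subLeft, Prod.fst_sub, Prod.snd_sub]
  rw [htrans]
  have hle : ∑ x : Vtx N, (((rhoN N x.1 + rhoN N x.2 : ℕ) : ℝ))⁻¹
      ≤ (∑ x : Vtx N, (if rhoN N x.2 < rhoN N x.1 then ((rhoN N x.1 : ℝ))⁻¹ else 0))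
        + (∑ x : Vtx N, (if rhoN N x.1 < rhoN N x.2 then ((rhoN N x.2 : ℝ))⁻¹ else 0))
        + (∑ x : Vtx N, (if rhoN N x.1 = rhoN N x.2
            then (((rhoN N x.1 + rhoN N x.1 : ℕ) : ℝ))⁻¹ else 0)) := by
    rw [← Finset.sum_add_distrib, ← Finset.sum_add_distrib]
    exact Finset.sum_le_sum (fun x _ => key_pointwise (rhoN N x.1) (rhoN N x.2))
  have hT1 : ∑ x : Vtx N, (if rhoN N x.2 < rhoN N x.1 then ((rhoN N x.1 : ℝ))⁻¹ else 0)
      ≤ 2 * N := by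
    rw [Fintype.sum_prod_type]
    calc _ ≤ ∑ _a : ZMod N, (2:ℝ) :=
          Finset.sum_le_sum (fun a _ => inner_lt N (rhoN N a))
      _ = 2 * N := by rw [Finset.sum_const, hcard, nsmul_eq_mul]; ring
  have hT2 : ∑ x : Vtx N, (if rhoN N x.1 < rhoN N x.2 then ((rhoN N x.2 : ℝ))⁻¹ else 0)
      ≤ 2 * N := by
    rw [Fintype.sum_prod_type, Finset.sum_comm]
    calc _ ≤ ∑ _b : ZMod N, (2:ℝ) :=
          Finset.sum_le_sum (fun b _ => inner_lt N (rhoN N b))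
      _ = 2 * N := by rw [Finset.sum_const, hcard, nsmul_eq_mul]; ring
  have hT3 : ∑ x : Vtx N, (if rhoN N x.1 = rhoN N x.2
      then (((rhoN N x.1 + rhoN N x.1 : ℕ) : ℝ))⁻¹ else 0) ≤ N := by
    rw [Fintype.sum_prod_type]
    have hinner : ∀ a : ZMod N,
        ∑ b : ZMod N, (if rhoN N a = rhoN N b
          then (((rhoN N a + rhoN N a : ℕ) : ℝ))⁻¹ else 0) ≤ 1 := by
      intro a
      have : ∀ b : ZMod N, (if rhoN N a = rhoN N b
          then (((rhoN N a + rhoN N a : ℕ) : ℝ))⁻¹ else 0)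
          = (if rhoN N b = rhoN N a
          then (((rhoN N a + rhoN N a : ℕ) : ℝ))⁻¹ else 0) := by
        intro b
        by_cases h : rhoN N a = rhoN N b
        · rw [if_pos h, if_pos h.symm]
        · rw [if_neg h, if_neg (fun h' => h h'.symm)]
      rw [Finset.sum_congr rfl (fun b _ => this b)]
      exact inner_eq N (rhoN N a)
    calc _ ≤ ∑ _a : ZMod N, (1:ℝ) := Finset.sum_le_sum (fun a _ => hinner a)
      _ = N := by rw [Finset.sum_const, hcard, nsmul_eq_mul]; ring
  linarith



lemma edge_nonneg (u w : Vtx N) : 0 ≤ edgeProb N ccr u w := by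
  unfold edgeProb
  split
  · exact le_rfl
  · exact le_min (by have := ccr_pos; positivity) (by norm_num)

lemma edge_eq {u w : Vtx N} (h : u ≠ w) :
    edgeProb N ccr u w = ccr / ((N : ℝ) * (torusDist N u w : ℝ)) := by
  have hN : (1:ℝ) ≤ N := by exact_mod_cast Nat.one_le_iff_ne_zero.mpr (NeZero.ne N)
  have hd : (1:ℝ) ≤ (torusDist N u w : ℝ) := by exact_mod_cast torusDist_pos N h
  unfold edgeProb
  rw [if_neg h]
  apply min_eq_left
  apply div_le_one_of_le₀
  · nlinarith [ccr_le, ccr_pos]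
  · positivity

lemma Zconst (x u : Vtx N) :
    ∑ w : Vtx N, edgeProb N ccr x w = ∑ w : Vtx N, edgeProb N ccr u w := by
  have h := Equiv.sum_comp (Equiv.addRight (x - u)) (edgeProb N ccr x)
  rw [← h]
  apply Finset.sum_congr rfl
  intro w _
  have hcond : (x = w + (x - u)) ↔ (u = w) := by
    constructor <;> intro h'
    · linear_combination h'
    · linear_combination h'
  have h1 : x.1 - (w + (x - u)).1 = u.1 - w.1 := by
    simp only [Prod.fst_add, Prod.fst_sub]; ring
  have h2 : x.2 - (w + (x - u)).2 = u.2 - w.2 := by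
    simp only [Prod.snd_add, Prod.snd_sub]; ring
  simp only [edgeProb, torusDist, Equiv.coe_addRight, h1, h2, hcond]


lemma torusDist_self (u : Vtx N) : torusDist N u u = 0 := by
  simp [torusDist, rhoN]


end StmtNine

/-- At the critical value, for all large `N` and all vertices `u, v`,
`P²(u,v) = Σ_x P(u,x)·P(x,v) ≥ (c/2)·(1/N²)`. -/
theorem stmt9 :
    ∃ N₀ : ℕ, ∀ (N : ℕ) [NeZero N], N₀ ≤ N →
      ∀ u v : Vtx N,
        ccr / 2 * (1 / (N : ℝ) ^ 2) ≤
          ∑ x : Vtx N, transP N ccr u x * transP N ccr x v := by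
  use 100
  intro N _ hN u v
  have hNR : (100:ℝ) ≤ N := by exact_mod_cast hN
  have hNpos : (0:ℝ) < N := by linarith
  have hc := ccr_pos
  have hcle := ccr_le
  have hcne : ccr ≠ 0 := ne_of_gt hc
  have hNne : (N:ℝ) ≠ 0 := ne_of_gt hNpos
  set Z := ∑ w : Vtx N, edgeProb N ccr u w with hZdef
  have hzc : ∀ x : Vtx N, ∑ w : Vtx N, edgeProb N ccr x w = Z := fun x => Zconst N x u
  -- Z lower bound
  have hZlow : ccr / 2 ≤ Z := by
    have hterm : ∀ w ∈ Finset.univ.erase u, ccr / ((N:ℝ) * N) ≤ edgeProb N ccr u w := by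
      intro w hw
      have hne : u ≠ w := fun h => (Finset.mem_erase.mp hw).1 h.symm
      rw [edge_eq N hne]
      have hd1 : (1:ℝ) ≤ (torusDist N u w : ℝ) := by exact_mod_cast torusDist_pos N hne
      have hdN : ((torusDist N u w : ℕ):ℝ) ≤ N := by exact_mod_cast torusDist_le N u w
      gcongr <;> first | exact hc.le | positivity | nlinarith
    have hsub : ∑ w ∈ Finset.univ.erase u, edgeProb N ccr u w ≤ Z := by
      rw [hZdef]
      exact Finset.sum_le_sum_of_subset_of_nonneg (Finset.erase_subset _ _)
        (fun i _ _ => edge_nonneg N u i)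
    have hcount : (Finset.univ.erase u).card = N * N - 1 := by
      rw [Finset.card_erase_of_mem (Finset.mem_univ u), Finset.card_univ]
      simp [ZMod.card]
    have hlow2 : ((N * N - 1 : ℕ):ℝ) * (ccr/((N:ℝ)*N)) ≤ Z := by
      have h := Finset.card_nsmul_le_sum (Finset.univ.erase u) _ _ hterm
      rw [hcount, nsmul_eq_mul] at h
      exact h.trans hsub
    have hNN : (1:ℕ) ≤ N * N := by nlinarith [show 100 ≤ N from hN]
    have hcast : ((N * N - 1 : ℕ):ℝ) = (N:ℝ) * N - 1 := by
      push_cast [Nat.cast_sub hNN]; ring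
    rw [hcast] at hlow2
    have hA : (10000:ℝ) ≤ (N:ℝ) * N := by nlinarith
    have : ccr / 2 ≤ ((N:ℝ) * N - 1) * (ccr/((N:ℝ)*N)) := by
      rw [mul_div_assoc'] at *
      rw [le_div_iff₀ (by positivity)]
      nlinarith
    linarith
  have hZpos : 0 < Z := lt_of_lt_of_le (by positivity) hZlow
  -- Z upper bound
  have hZhigh : Z ≤ 5 * ccr := by
    have hterm : ∀ w : Vtx N, edgeProb N ccr u w
        ≤ ccr / N * (((torusDist N u w : ℕ):ℝ))⁻¹ := by
      intro w
      by_cases h : u = w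
      · subst h
        rw [torusDist_self]
        unfold edgeProb
        rw [if_pos rfl]
        simp
      · have hd1 : (1:ℝ) ≤ (torusDist N u w:ℝ) := by exact_mod_cast torusDist_pos N h
        rw [edge_eq N h]
        apply le_of_eq
        rw [div_mul_eq_div_div, div_eq_mul_inv]
    calc Z ≤ ∑ w : Vtx N, ccr / N * (((torusDist N u w : ℕ):ℝ))⁻¹ :=
          Finset.sum_le_sum (fun w _ => hterm w)
      _ = ccr / N * ∑ w : Vtx N, (((torusDist N u w : ℕ):ℝ))⁻¹ := by
          rw [Finset.mul_sum]
      _ ≤ ccr / N * (5 * N) := by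
          apply mul_le_mul_of_nonneg_left (sum_inv_rho_le N u) (by positivity)
      _ = 5 * ccr := by field_simp
  -- transP basics
  have hTP : ∀ x y : Vtx N, transP N ccr x y = edgeProb N ccr x y / Z := by
    intro x y; unfold transP; rw [hzc x]
  have hTnn : ∀ x y : Vtx N, 0 ≤ transP N ccr x y := by
    intro x y; rw [hTP]; exact div_nonneg (edge_nonneg N x y) hZpos.le
  have hrow : ∑ x : Vtx N, transP N ccr u x = 1 := by
    have h1 : ∑ x : Vtx N, transP N ccr u x = (∑ x : Vtx N, edgeProb N ccr u x) / Z := by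
      rw [Finset.sum_div]
      exact Finset.sum_congr rfl (fun x _ => hTP u x)
    rw [h1, ← hZdef, div_self (ne_of_gt hZpos)]
  have hTuv : transP N ccr u v ≤ 2 / N := by
    have hedge : edgeProb N ccr u v ≤ ccr / N := by
      by_cases h : u = v
      · subst h; unfold edgeProb; rw [if_pos rfl]; positivity
      · rw [edge_eq N h]
        have hd1 : (1:ℝ) ≤ (torusDist N u v:ℝ) := by exact_mod_cast torusDist_pos N h
        calc ccr / ((N:ℝ) * (torusDist N u v:ℝ)) ≤ ccr / ((N:ℝ) * 1) := by
              gcongr <;> first | exact hc.le | positivity | nlinarith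
          _ = ccr / N := by rw [mul_one]
    rw [hTP]
    calc edgeProb N ccr u v / Z ≤ (ccr/N) / (ccr/2) := by
          gcongr <;> first | exact hZlow | positivity | nlinarith
        _ = 2/N := by
          field_simp
  -- main chain
  set C := ccr / ((N:ℝ)^2 * Z) with hCdef
  have hClow : 1/(5*(N:ℝ)^2) ≤ C := by
    rw [hCdef]
    calc (1:ℝ)/(5*(N:ℝ)^2) = ccr/((N:ℝ)^2*(5*ccr)) := by
          field_simp
      _ ≤ ccr/((N:ℝ)^2*Z) := by
          gcongr <;> first | exact hZpos | exact hZhigh | positivity | nlinarith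
  have hstep1 : ∀ x ∈ Finset.univ.erase v,
      transP N ccr u x * C ≤ transP N ccr u x * transP N ccr x v := by
    intro x hx
    have hne : x ≠ v := (Finset.mem_erase.mp hx).1
    apply mul_le_mul_of_nonneg_left _ (hTnn u x)
    rw [hTP, edge_eq N hne, hCdef, div_div]
    have hd1 : (1:ℝ) ≤ (torusDist N x v:ℝ) := by exact_mod_cast torusDist_pos N hne
    have hdN : ((torusDist N x v : ℕ):ℝ) ≤ N := by exact_mod_cast torusDist_le N x v
    gcongr <;> first | exact hc.le | exact hZpos | positivity | nlinarith
  have hsum1 : ∑ x ∈ Finset.univ.erase v, transP N ccr u x = 1 - transP N ccr u v := by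
    have h := Finset.sum_erase_add Finset.univ (fun x => transP N ccr u x) (Finset.mem_univ v)
    rw [hrow] at h
    linarith
  have h2N : 2/(N:ℝ) ≤ 0.02 := by
    rw [div_le_iff₀ hNpos]; linarith
  have hkey : ccr/2 ≤ (1 - 2/(N:ℝ))/5 := by linarith
  calc ccr / 2 * (1 / (N : ℝ) ^ 2)
      ≤ ((1 - 2/(N:ℝ))/5) * (1/(N:ℝ)^2) :=
        mul_le_mul_of_nonneg_right hkey (by positivity)
    _ = (1 - 2/(N:ℝ)) * (1/(5*(N:ℝ)^2)) := by ring
    _ ≤ (1 - transP N ccr u v) * C := by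
        apply mul_le_mul (by linarith) hClow (by positivity) (by linarith)
    _ = ∑ x ∈ Finset.univ.erase v, transP N ccr u x * C := by
        rw [← Finset.sum_mul, hsum1]
    _ ≤ ∑ x ∈ Finset.univ.erase v, transP N ccr u x * transP N ccr x v :=
        Finset.sum_le_sum hstep1
    _ ≤ ∑ x : Vtx N, transP N ccr u x * transP N ccr x v :=
        Finset.sum_le_sum_of_subset_of_nonneg (Finset.erase_subset _ _)
          (fun i _ _ => mul_nonneg (hTnn u i) (hTnn i v))
end
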